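/- arXiv:1306.4935 — 3 statements merged into one kernel-verified Lean document; each statement's English description precedes it below -/
import Mathlib

section
/- Let R be a commutative ring and α, β ∈ R. Define s_n = Σ_{i=0}^{n} α^i β^{n-i}. Then in R[[X]] one has (1 - α²X)(1 - β²X) · Σ_{k≥0} s_{2k} X^k = 1 + αβX. -/
open PowerSeries

private lemma coeff_one_sub_CX_mul {R : Type*} [CommRing R] (c : R) (f : PowerSeries R) (n : ℕ) :
    (PowerSeries.coeff (n + 1)) ((1 - PowerSeries.C c * PowerSeries.X) * f) =
      PowerSeries.coeff (n + 1) f - c * PowerSeries.coeff n f := by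
  have : (1 - PowerSeries.C c * PowerSeries.X) * f
      = f - PowerSeries.C c * (PowerSeries.X * f) := by ring
  rw [this, map_sub, PowerSeries.coeff_C_mul, PowerSeries.coeff_succ_X_mul]

private lemma coeff_zero_one_sub_CX_mul {R : Type*} [CommRing R] (c : R) (f : PowerSeries R) :
    (PowerSeries.coeff 0) ((1 - PowerSeries.C c * PowerSeries.X) * f) =
      PowerSeries.coeff 0 f := by
  have : (1 - PowerSeries.C c * PowerSeries.X) * f
      = f - PowerSeries.C c * (PowerSeries.X * f) := by ring
  rw [this, map_sub, PowerSeries.coeff_C_mul, PowerSeries.coeff_zero_X_mul, mul_zero, sub_zero]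

theorem stmt_1 (R : Type*) [CommRing R] (α β : R) (s : ℕ → R)
    (hs : ∀ n, s n = ∑ i ∈ Finset.range (n + 1), α ^ i * β ^ (n - i)) :
    (1 - PowerSeries.C (α ^ 2) * PowerSeries.X) * (1 - PowerSeries.C (β ^ 2) * PowerSeries.X) *
      PowerSeries.mk (fun k => s (2 * k)) = 1 + PowerSeries.C (α * β) * PowerSeries.X := by
  -- recurrences for s
  have h1 : ∀ n, s (n + 1) = α * s n + β ^ (n + 1) := by
    intro n
    rw [hs, hs, Finset.sum_range_succ', Finset.mul_sum]
    congr 1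
    · apply Finset.sum_congr rfl
      intro i _
      have : n + 1 - (i + 1) = n - i := by omega
      rw [this, pow_succ]
      ring
    · simp
  have h2 : ∀ n, s (n + 1) = β * s n + α ^ (n + 1) := by
    intro n
    rw [hs, hs, Finset.sum_range_succ, Finset.mul_sum]
    congr 1
    · apply Finset.sum_congr rfl
      intro i hi
      have hi' : i ≤ n := Nat.lt_succ_iff.mp (Finset.mem_range.mp hi)
      have : n + 1 - i = (n - i) + 1 := by omega
      rw [this, pow_succ]
      ring
    · simp
  have hrec : ∀ n, s (n + 2) = (α + β) * s (n + 1) - α * β * s n := by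
    intro n
    have e1 := h1 (n + 1)
    have e2 := h1 n
    have : β ^ (n + 2) = β * β ^ (n + 1) := by rw [pow_succ]; ring
    rw [this] at e1
    linear_combination e1 - β * e2
  have hrec2 : ∀ n, s (n + 4) = (α ^ 2 + β ^ 2) * s (n + 2) - α ^ 2 * β ^ 2 * s n := by
    intro n
    have e1 := hrec (n + 2)
    have e2 := hrec (n + 1)
    have e3 := hrec n
    linear_combination e1 + (α + β) * e2 + α * β * e3
  have hs0 : s 0 = 1 := by simp [hs]
  have hs2 : s 2 = α ^ 2 + α * β + β ^ 2 := by
    rw [hs]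
    simp [Finset.sum_range_succ]
    ring
  ext n
  rw [mul_assoc]
  rcases n with _ | _ | n
  · rw [coeff_zero_one_sub_CX_mul, coeff_zero_one_sub_CX_mul]
    simp [hs0]
  · rw [coeff_one_sub_CX_mul, coeff_one_sub_CX_mul, coeff_zero_one_sub_CX_mul]
    simp [hs0, hs2]
    try ring
  · rw [coeff_one_sub_CX_mul, coeff_one_sub_CX_mul, coeff_one_sub_CX_mul]
    simp only [PowerSeries.coeff_mk]
    have key := hrec2 (2 * n)
    have e1 : 2 * (n + 1 + 1) = 2 * n + 4 := by ring
    have e2 : 2 * (n + 1) = 2 * n + 2 := by ring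
    rw [e1, e2, key]
    have : (PowerSeries.coeff (n + 1 + 1)) (1 + PowerSeries.C (α * β) * PowerSeries.X) = 0 := by
      simp [PowerSeries.coeff_one]
    rw [this]
    ring
end

section
/- Let R be a commutative ring and α, β ∈ R. Define s_n = Σ_{i=0}^{n} α^i β^{n-i}. Then in R[[X]] one has (1 - α²X)(1 - αβX)(1 - β²X) · Σ_{k≥0} s_{2k} X^k = 1 - α²β²X². -/
open PowerSeries

private lemma srec (R : Type*) [CommRing R] (α β : R) (s : ℕ → R)
    (hs : ∀ n, s n = ∑ i ∈ Finset.range (n + 1), α ^ i * β ^ (n - i)) (n : ℕ) :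
    s (n + 2) = (α + β) * s (n + 1) - α * β * s n := by
  have h1 : ∀ m, s (m + 1) = α * s m + β ^ (m + 1) := by
    intro m
    rw [hs (m + 1), hs m, Finset.sum_range_succ' (fun i => α ^ i * β ^ (m + 1 - i)),
      Finset.mul_sum]
    congr 1
    · apply Finset.sum_congr rfl
      intro i _
      simp only [Nat.succ_sub_succ]
      ring
    · simp
  have := h1 (n + 1)
  have hb : β ^ (n + 2) = β * (s (n + 1) - α * s n) := by
    have h := h1 n
    rw [pow_succ, show s (n+1) - α * s n = β ^ (n+1) by rw [h]; ring]
    ring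
  rw [this, hb]
  ring

theorem stmt_2 (R : Type*) [CommRing R] (α β : R) (s : ℕ → R)
    (hs : ∀ n, s n = ∑ i ∈ Finset.range (n + 1), α ^ i * β ^ (n - i)) :
    (1 - PowerSeries.C (R := R) (α ^ 2) * PowerSeries.X) * (1 - PowerSeries.C (R := R) (α * β) * PowerSeries.X) *
      (1 - PowerSeries.C (R := R) (β ^ 2) * PowerSeries.X) * PowerSeries.mk (fun k => s (2 * k)) =
      1 - PowerSeries.C (R := R) (α ^ 2 * β ^ 2) * PowerSeries.X ^ 2 := by
  set T : PowerSeries R := PowerSeries.mk (fun k => s (2 * k)) with hT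
  set a : R := α ^ 2 + β ^ 2 with ha
  set b : R := α ^ 2 * β ^ 2 with hb
  have key : (1 - C (R := R) a * X + C (R := R) b * X ^ 2) * T = 1 + C (R := R) (α * β) * X := by
    ext n
    have hrec := srec R α β s hs
    rw [show (1 - C (R := R) a * X + C (R := R) b * X ^ 2) * T
        = T - C (R := R) a * (X * T) + C (R := R) b * (X ^ 2 * T) by ring,
      show (1 : PowerSeries R) + C (R := R) (α * β) * X = C (R := R) (α * β) * X + 1 by ring]
    simp only [map_add, map_sub, PowerSeries.coeff_C_mul, PowerSeries.coeff_one,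
      PowerSeries.coeff_X]
    match n with
    | 0 =>
      simp [hT, hs 0]
    | 1 =>
      rw [PowerSeries.coeff_succ_X_mul, PowerSeries.coeff_X_pow_mul' T 2 1]
      simp only [hT, coeff_mk, if_neg (by norm_num : ¬ (2 : ℕ) ≤ 1), mul_zero, add_zero,
        if_pos rfl, Nat.one_ne_zero, if_false, mul_one]
      rw [ha, hs 2, hs 0]
      simp [Finset.sum_range_succ]
      ring
    | (m + 2) =>
      rw [PowerSeries.coeff_succ_X_mul, PowerSeries.coeff_X_pow_mul T 2 m]
      simp only [hT, coeff_mk, show m + 2 ≠ 1 by omega, if_false,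
        show m + 2 ≠ 0 by omega, if_false, mul_zero, zero_add, add_zero]
      rw [show 2 * (m + 2) = (2 * m + 2) + 2 by ring, show 2 * (m + 1) = 2 * m + 2 by ring,
        hrec (2 * m + 2), hrec (2 * m + 1), show 2 * m + 1 + 1 = 2 * m + 2 from rfl,
        hrec (2 * m), ha, hb]
      ring
  have hfact : (1 - C (R := R) (α ^ 2) * X) * (1 - C (R := R) (β ^ 2) * X) = 1 - C (R := R) a * X + C (R := R) b * X ^ 2 := by
    have h1 : C (R := R) a = C (R := R) (α ^ 2) + C (R := R) (β ^ 2) := map_add _ _ _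
    have h2 : C (R := R) b = C (R := R) (α ^ 2) * C (R := R) (β ^ 2) := map_mul _ _ _
    rw [h1, h2]; ring
  have hsq : C (R := R) b = C (R := R) (α * β) * C (R := R) (α * β) := by
    rw [← map_mul, hb]; ring_nf
  calc (1 - C (R := R) (α ^ 2) * X) * (1 - C (R := R) (α * β) * X) * (1 - C (R := R) (β ^ 2) * X) * T
      = (1 - C (R := R) (α * β) * X) * ((1 - C (R := R) (α ^ 2) * X) * (1 - C (R := R) (β ^ 2) * X) * T) := by ring
    _ = (1 - C (R := R) (α * β) * X) * (1 + C (R := R) (α * β) * X) := by rw [hfact, key]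
    _ = 1 - C (R := R) b * X ^ 2 := by rw [hsq]; ring
end

section
/- Let A be a commutative ring that is finitely generated as a ℤ_p-module (hence complete in its p-adic topology), and let x ∈ A. Then the sequence (x^{n!})_{n≥1} converges in the p-adic topology of A, and its limit e = lim_n x^{n!} is an idempotent: e² = e. -/
lemma aux_pow_stab {B : Type*} [Monoid B] (y : B) {r s : ℕ}
    (h : y ^ (r + s) = y ^ r) : ∀ a, r ≤ a → ∀ t, y ^ (a + t * s) = y ^ a := by
  intro a ha t
  induction t with
  | zero => simp
  | succ t ih =>
    have h0 : a + (t + 1) * s = (a + t * s) + s := by ring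
    have h1 : (a + t * s) + s = (a + t * s - r) + (r + s) := by omega
    have h2 : (a + t * s - r) + r = a + t * s := by omega
    rw [h0, h1, pow_add, h, ← pow_add, h2, ih]

lemma aux_exists_stab_of_lt {B : Type*} [Monoid B] (y : B) {i j : ℕ} (hij : i < j)
    (heq : y ^ i = y ^ j) :
    ∃ N, ∀ n : ℕ, N ≤ n → ∀ k : ℕ, 1 ≤ k → y ^ (k * n.factorial) = y ^ n.factorial := by
  refine ⟨max i (j - i), fun n hn k hk => ?_⟩
  have hs : 0 < j - i := by omega
  have h : y ^ (i + (j - i)) = y ^ i := by rw [show i + (j - i) = j by omega, heq]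
  have hrn : i ≤ n.factorial := le_trans (le_trans (le_max_left _ _) hn) n.self_le_factorial
  have hdvd : (j - i) ∣ (k - 1) * n.factorial :=
    Dvd.dvd.mul_left (Nat.dvd_factorial hs (le_trans (le_max_right _ _) hn)) _
  obtain ⟨t, ht⟩ := hdvd
  have hkn : k * n.factorial = n.factorial + t * (j - i) := by
    obtain ⟨k', rfl⟩ : ∃ k', k = k' + 1 := ⟨k - 1, by omega⟩
    have : k' * n.factorial = t * (j - i) := by rw [mul_comm t]; simpa using ht
    calc (k' + 1) * n.factorial = n.factorial + k' * n.factorial := by ring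
      _ = n.factorial + t * (j - i) := by rw [this]
  rw [hkn, aux_pow_stab y h _ hrn]

lemma aux_exists_stab {B : Type*} [Monoid B] [Finite B] (y : B) :
    ∃ N, ∀ n : ℕ, N ≤ n → ∀ k : ℕ, 1 ≤ k → y ^ (k * n.factorial) = y ^ n.factorial := by
  obtain ⟨i, j, hne, hij⟩ := Finite.exists_ne_map_eq_of_infinite (fun n : ℕ => y ^ n)
  rcases hne.lt_or_gt with h | h
  · exact aux_exists_stab_of_lt y h hij
  · exact aux_exists_stab_of_lt y h hij.symm

lemma aux_smul_pow_eq {p : ℕ} [Fact p.Prime] {A : Type*} [CommRing A] [Algebra ℤ_[p] A]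
    (m : ℕ) (a : A) : ((p : ℤ_[p]) ^ m) • a = (p : A) ^ m * a := by
  rw [Algebra.smul_def, map_pow, map_natCast]

lemma aux_quot_finite {p : ℕ} [Fact p.Prime] (A : Type*) [CommRing A] [Algebra ℤ_[p] A]
    [Module.Finite ℤ_[p] A] (m : ℕ) : Finite (A ⧸ Ideal.span {(p : A) ^ m}) := by
  haveI : NeZero (p ^ m) := ⟨pow_ne_zero m (Fact.out : p.Prime).ne_zero⟩
  obtain ⟨K, φ, hφ⟩ := Module.Finite.exists_fin' ℤ_[p] A
  set I := Ideal.span {(p : A) ^ m} with hIdef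
  apply Finite.of_surjective
    (fun w : Fin K → ZMod (p ^ m) => Ideal.Quotient.mk I (φ (fun i => ((w i).val : ℤ_[p]))))
  intro b
  obtain ⟨a, rfl⟩ := Ideal.Quotient.mk_surjective b
  obtain ⟨v, rfl⟩ := hφ a
  refine ⟨fun i => PadicInt.toZModPow m (v i), ?_⟩
  rw [Ideal.Quotient.eq]
  have hdvd : ∀ i, (p : ℤ_[p]) ^ m ∣ ((((PadicInt.toZModPow m (v i)).val : ℕ) : ℤ_[p]) - v i) := by
    intro i
    rw [← Ideal.mem_span_singleton, ← PadicInt.ker_toZModPow, RingHom.mem_ker, map_sub,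
      map_natCast, ZMod.natCast_val, ZMod.cast_id, sub_self]
  choose c hc using hdvd
  have hfun : (fun i => (((PadicInt.toZModPow m (v i)).val : ℕ) : ℤ_[p])) - v
      = ((p : ℤ_[p]) ^ m) • c := by
    funext i
    simp only [Pi.sub_apply, Pi.smul_apply, smul_eq_mul]
    exact hc i
  rw [← map_sub, hfun, map_smul, aux_smul_pow_eq]
  exact Ideal.mem_span_singleton.mpr ⟨φ c, rfl⟩

theorem stmt_11 (p : ℕ) [Fact p.Prime] (A : Type*) [CommRing A] [Algebra ℤ_[p] A]
    (hA : Module.Finite ℤ_[p] A) (x : A) :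
    ∃ e : A,
      (∀ m : ℕ, ∃ N : ℕ, ∀ n ≥ N, x ^ n.factorial - e ∈ Ideal.span {(p : A) ^ m}) ∧
      e * e = e := by
  haveI := hA
  classical
  have hp1 : 1 < (p : ℝ) := by exact_mod_cast (Fact.out : p.Prime).one_lt
  have hsm : ∀ (m : ℕ) (a : A), ((p : ℤ_[p]) ^ m) • a = (p : A) ^ m * a :=
    fun m a => aux_smul_pow_eq m a
  have key : ∀ m : ℕ, ∃ N : ℕ, ∀ n : ℕ, N ≤ n → ∀ k : ℕ, 1 ≤ k →
      x ^ (k * n.factorial) - x ^ n.factorial ∈ Ideal.span {(p : A) ^ m} := by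
    intro m
    haveI : Finite (A ⧸ Ideal.span {(p : A) ^ m}) := aux_quot_finite A m
    obtain ⟨N, hN⟩ := aux_exists_stab (Ideal.Quotient.mk (Ideal.span {(p : A) ^ m}) x)
    refine ⟨N, fun n hn k hk => ?_⟩
    have h := hN n hn k hk
    rwa [← map_pow, ← map_pow, ← sub_eq_zero, ← map_sub, Ideal.Quotient.eq_zero_iff_mem] at h
  choose N hN using key
  let g : ℕ → ℕ := fun m => Nat.rec (N 0) (fun m ih => max ih (N (m + 1))) m
  have hg0 : ∀ m, N m ≤ g m := by
    intro m
    cases m with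
    | zero => exact le_rfl
    | succ m => exact le_max_right _ _
  have hgmono : Monotone g := monotone_nat_of_le_succ fun m => le_max_left _ _
  have KK : ∀ m n : ℕ, g m ≤ n →
      x ^ n.factorial - x ^ (g m).factorial ∈ Ideal.span {(p : A) ^ m} := by
    intro m n hn
    obtain ⟨k, hk⟩ := Nat.factorial_dvd_factorial hn
    have hk1 : 1 ≤ k := by
      rcases Nat.eq_zero_or_pos k with h | h
      · exfalso; rw [h, mul_zero] at hk; exact (Nat.factorial_pos n).ne' hk
      · exact h
    have h := hN m (g m) (hg0 m) k hk1
    rwa [mul_comm, ← hk] at h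
  obtain ⟨K, φ, hφ⟩ := Module.Finite.exists_fin' ℤ_[p] A
  have exrec : ∀ m : ℕ, ∀ b : Fin K → ℤ_[p], φ b = x ^ (g m).factorial →
      ∃ b' : Fin K → ℤ_[p], φ b' = x ^ (g (m + 1)).factorial ∧
        ∀ i, ‖b' i - b i‖ ≤ (p : ℝ) ^ (-(m : ℤ)) := by
    intro m b hb
    obtain ⟨t, ht⟩ := Ideal.mem_span_singleton.mp (KK m (g (m + 1)) (hgmono (Nat.le_succ m)))
    obtain ⟨c, hc⟩ := hφ t
    refine ⟨b + ((p : ℤ_[p]) ^ m) • c, ?_, ?_⟩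
    · rw [map_add, map_smul, hb, hc, hsm, ← ht]; ring
    · intro i
      simp only [Pi.add_apply, Pi.smul_apply, smul_eq_mul, add_sub_cancel_left]
      calc ‖(p : ℤ_[p]) ^ m * c i‖ ≤ ‖(p : ℤ_[p]) ^ m‖ * ‖c i‖ := norm_mul_le _ _
        _ ≤ (p : ℝ) ^ (-(m : ℤ)) * 1 :=
            mul_le_mul (le_of_eq (PadicInt.norm_p_pow m)) (PadicInt.norm_le_one _)
              (norm_nonneg _) (by positivity)
        _ = (p : ℝ) ^ (-(m : ℤ)) := mul_one _
  let b : ℕ → Fin K → ℤ_[p] := fun m => Nat.rec (hφ (x ^ (g 0).factorial)).choose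
    (fun m bm => if h : φ bm = x ^ (g m).factorial then (exrec m bm h).choose else 0) m
  have hb : ∀ m, φ (b m) = x ^ (g m).factorial := by
    intro m
    induction m with
    | zero => exact (hφ (x ^ (g 0).factorial)).choose_spec
    | succ m ih =>
      show φ (if h : φ (b m) = x ^ (g m).factorial then (exrec m (b m) h).choose else 0) = _
      rw [dif_pos ih]
      exact (exrec m (b m) ih).choose_spec.1
  have hbstep : ∀ m i, ‖b (m + 1) i - b m i‖ ≤ (p : ℝ) ^ (-(m : ℤ)) := by
    intro m i
    have hm := hb m
    show ‖(if h : φ (b m) = x ^ (g m).factorial then (exrec m (b m) h).choose else 0) i - b m i‖ ≤ _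
    rw [dif_pos hm]
    exact (exrec m (b m) hm).choose_spec.2 i
  have hbound : ∀ m m' : ℕ, m ≤ m' → ∀ i, ‖b m' i - b m i‖ ≤ (p : ℝ) ^ (-(m : ℤ)) := by
    intro m m' hm
    induction m', hm using Nat.le_induction with
    | base =>
      intro i
      simp only [sub_self, norm_zero]
      exact zpow_nonneg (by positivity) _
    | succ m' hm' ih =>
      intro i
      have h1 : b (m' + 1) i - b m i = (b (m' + 1) i - b m' i) + (b m' i - b m i) := by ring
      rw [h1]
      refine le_trans (PadicInt.nonarchimedean _ _) (max_le ?_ (ih i))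
      refine le_trans (hbstep m' i) (zpow_le_zpow_right₀ (le_of_lt hp1) (by omega))
  have hcauchy : ∀ i, ∃ L : ℤ_[p], Filter.Tendsto (fun m => b m i) Filter.atTop (nhds L) := by
    intro i
    apply cauchySeq_tendsto_of_complete
    apply cauchySeq_of_le_tendsto_0 (fun n : ℕ => (p : ℝ) ^ (-(n : ℤ)))
    · intro n m' M hn hm
      rw [dist_eq_norm]
      rcases le_total n m' with h | h
      · rw [← norm_neg]
        simp only [neg_sub]
        exact le_trans (hbound n m' h i) (zpow_le_zpow_right₀ (le_of_lt hp1) (by omega))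
      · exact le_trans (hbound m' n h i) (zpow_le_zpow_right₀ (le_of_lt hp1) (by omega))
    · have hrew : ∀ n : ℕ, (p : ℝ) ^ (-(n : ℤ)) = ((p : ℝ)⁻¹) ^ n := by
        intro n
        rw [zpow_neg, zpow_natCast, inv_pow]
      simp only [hrew]
      exact tendsto_pow_atTop_nhds_zero_of_lt_one (by positivity)
        (inv_lt_one_of_one_lt₀ hp1)
  choose L hL using hcauchy
  have hLb : ∀ m i, ‖L i - b m i‖ ≤ (p : ℝ) ^ (-(m : ℤ)) := by
    intro m i
    apply le_of_tendsto (((hL i).sub tendsto_const_nhds).norm)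
    filter_upwards [Filter.eventually_ge_atTop m] with m' hm'
    exact hbound m m' hm' i
  have hdvd : ∀ m, ∀ i, (p : ℤ_[p]) ^ m ∣ (L i - b m i) := fun m i =>
    Ideal.mem_span_singleton.mp ((PadicInt.norm_le_pow_iff_mem_span_pow _ m).mp (hLb m i))
  have he : ∀ m, φ L - x ^ (g m).factorial ∈ Ideal.span {(p : A) ^ m} := by
    intro m
    choose c hc using hdvd m
    have hfun : L - b m = ((p : ℤ_[p]) ^ m) • c := by
      funext i
      simp only [Pi.sub_apply, Pi.smul_apply, smul_eq_mul]
      exact hc i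
    rw [← hb m, ← map_sub, hfun, map_smul, hsm]
    exact Ideal.mem_span_singleton.mpr ⟨φ c, rfl⟩
  refine ⟨φ L, ?_, ?_⟩
  · intro m
    refine ⟨g m, fun n hn => ?_⟩
    have h := Ideal.sub_mem _ (KK m n hn) (he m)
    convert h using 1
    ring
  · have hmem : ∀ m : ℕ, φ L * φ L - φ L ∈ Ideal.span {(p : A) ^ m} := by
      intro m
      have h3 : x ^ (g m).factorial * x ^ (g m).factorial - x ^ (g m).factorial
          ∈ Ideal.span {(p : A) ^ m} := by
        have h := hN m (g m) (hg0 m) 2 (by norm_num)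
        rwa [two_mul, pow_add] at h
      have h4 := Ideal.sub_mem _ (Ideal.add_mem _ (Ideal.add_mem _
        (Ideal.mul_mem_right (φ L) _ (he m))
        (Ideal.mul_mem_left _ (x ^ (g m).factorial) (he m))) h3) (he m)
      convert h4 using 1
      ring
    let M0 := (Fin K → ℤ_[p]) ⧸ LinearMap.ker φ
    let eqv : A ≃ₗ[ℤ_[p]] M0 := (φ.quotKerEquivOfSurjective hφ).symm
    have hbot := Ideal.iInf_pow_smul_eq_bot_of_isLocalRing (R := ℤ_[p]) (M := M0)
        (I := IsLocalRing.maximalIdeal ℤ_[p])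
        (Ideal.IsMaximal.ne_top (IsLocalRing.maximalIdeal.isMaximal _))
    have hmem2 : eqv (φ L * φ L - φ L) ∈ (⊥ : Submodule ℤ_[p] M0) := by
      rw [← hbot, Submodule.mem_iInf]
      intro m
      rw [PadicInt.maximalIdeal_eq_span_p, Ideal.span_singleton_pow,
        Submodule.ideal_span_singleton_smul]
      obtain ⟨t, ht⟩ := Ideal.mem_span_singleton.mp (hmem m)
      have hrw : eqv (φ L * φ L - φ L) = ((p : ℤ_[p]) ^ m) • eqv t := by
        rw [← map_smul, hsm, ht]
      rw [hrw]
      exact Submodule.smul_mem_pointwise_smul _ _ ⊤ Submodule.mem_top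
    rw [Submodule.mem_bot] at hmem2
    have h0 : φ L * φ L - φ L = 0 := by
      apply eqv.injective
      rw [hmem2, map_zero]
    exact sub_eq_zero.mp h0
end
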